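/- arXiv:2207.07760 — 4 statements merged into one kernel-verified Lean document; each statement's English description precedes it below -/
import Mathlib

section
/- Let K and P be Hermitian matrices of the same finite dimension. Then tr(P·exp(K)) / tr(exp(K)) ≤ log( tr(exp(K+P)) / tr(exp(K)) ). -/
set_option maxHeartbeats 1000000

open NormedSpace Matrix Finset

/-- exp of a Hermitian matrix via spectral decomposition. -/
lemma expHerm {n : ℕ} {A : Matrix (Fin n) (Fin n) ℂ} (hA : A.IsHermitian) :
    exp A = (hA.eigenvectorUnitary : Matrix (Fin n) (Fin n) ℂ) *
      Matrix.diagonal (fun i => (Real.exp (hA.eigenvalues i) : ℂ)) *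
      star (hA.eigenvectorUnitary : Matrix (Fin n) (Fin n) ℂ) := by
  set U : Matrix (Fin n) (Fin n) ℂ := ↑hA.eigenvectorUnitary with hUdef
  have hU1 : star U * U = 1 := (Unitary.mem_iff.mp hA.eigenvectorUnitary.2).1
  have hU2 : U * star U = 1 := (Unitary.mem_iff.mp hA.eigenvectorUnitary.2).2
  have hUu : IsUnit U := ⟨⟨U, star U, hU2, hU1⟩, rfl⟩
  have hinv : U⁻¹ = star U := Matrix.inv_eq_left_inv hU1
  conv_lhs => rw [hA.spectral_theorem, Unitary.conjStarAlgAut_apply, ← hUdef, ← hinv]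
  rw [Matrix.exp_conj _ _ hUu, Matrix.exp_diagonal, hinv, Pi.exp_def]
  congr 2
  funext i
  simp [Function.comp, ← Complex.exp_eq_exp_ℂ, Complex.ofReal_exp]

lemma traceExpHerm {n : ℕ} {A : Matrix (Fin n) (Fin n) ℂ} (hA : A.IsHermitian) :
    (exp A).trace = ((∑ i, Real.exp (hA.eigenvalues i) : ℝ) : ℂ) := by
  set U : Matrix (Fin n) (Fin n) ℂ := ↑hA.eigenvectorUnitary with hUdef
  have hU1 : star U * U = 1 := (Unitary.mem_iff.mp hA.eigenvectorUnitary.2).1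
  rw [expHerm hA, ← hUdef, Matrix.trace_mul_comm, ← mul_assoc, hU1, one_mul,
    Matrix.trace_diagonal]
  push_cast
  rfl

/-- Peierls–Bogoliubov inequality: for Hermitian matrices `K`, `P`,
`tr(P e^K)/tr(e^K) ≤ log( tr(e^{K+P})/tr(e^K) )`. -/
theorem stmt1 {n : ℕ} (K P : Matrix (Fin n) (Fin n) ℂ)
    (hK : K.IsHermitian) (hP : P.IsHermitian) :
    (P * NormedSpace.exp K).trace.re / (NormedSpace.exp K).trace.re ≤
      Real.log ((NormedSpace.exp (K + P)).trace.re / (NormedSpace.exp K).trace.re) := by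
  rcases Nat.eq_zero_or_pos n with hn | hn
  · subst hn
    simp [Matrix.trace]
  have hAh : (K + P).IsHermitian := hK.add hP
  set U : Matrix (Fin n) (Fin n) ℂ := ↑hK.eigenvectorUnitary with hUdef
  set V : Matrix (Fin n) (Fin n) ℂ := ↑hAh.eigenvectorUnitary with hVdef
  have hU1 : star U * U = 1 := (Unitary.mem_iff.mp hK.eigenvectorUnitary.2).1
  have hU2 : U * star U = 1 := (Unitary.mem_iff.mp hK.eigenvectorUnitary.2).2
  have hV1 : star V * V = 1 := (Unitary.mem_iff.mp hAh.eigenvectorUnitary.2).1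
  have hV2 : V * star V = 1 := (Unitary.mem_iff.mp hAh.eigenvectorUnitary.2).2
  set lam : Fin n → ℝ := hK.eigenvalues with hlamdef
  set mu : Fin n → ℝ := hAh.eigenvalues with hmudef
  set B : Matrix (Fin n) (Fin n) ℂ := star U * P * U with hBdef
  set p : Fin n → ℝ := fun i => (B i i).re with hpdef
  set Z : ℝ := ∑ i, Real.exp (lam i) with hZdef
  set T : ℝ := ∑ j, Real.exp (mu j) with hTdef
  set W : Matrix (Fin n) (Fin n) ℂ := star U * V with hWdef
  have hWstar : star W = star V * U := by
    rw [hWdef, StarMul.star_mul, star_star]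
  have hW1 : W * star W = 1 := by
    rw [hWdef, hWstar, mul_assoc, ← mul_assoc V, hV2, one_mul, hU1]
  have hW2 : star W * W = 1 := by
    rw [hWdef, hWstar, mul_assoc, ← mul_assoc U, hU2, one_mul, hV1]
  -- trace identities
  have hZ : (exp K).trace.re = Z := by rw [traceExpHerm hK, Complex.ofReal_re]
  have hT : (exp (K + P)).trace.re = T := by rw [traceExpHerm hAh, Complex.ofReal_re]
  have hZpos : 0 < Z := Finset.sum_pos (fun i _ => Real.exp_pos _)
    ⟨⟨0, hn⟩, Finset.mem_univ _⟩
  -- trace of P * exp K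
  have htrP : (P * exp K).trace = ∑ i, (Real.exp (lam i) : ℂ) * B i i := by
    rw [expHerm hK, ← hUdef]
    have h1 : P * (U * Matrix.diagonal (fun i => (Real.exp (lam i) : ℂ)) * star U)
        = (P * U * Matrix.diagonal (fun i => (Real.exp (lam i) : ℂ))) * star U := by
      simp only [mul_assoc]
    rw [h1, Matrix.trace_mul_comm]
    have h2 : star U * (P * U * Matrix.diagonal (fun i => (Real.exp (lam i) : ℂ)))
        = B * Matrix.diagonal (fun i => (Real.exp (lam i) : ℂ)) := by
      rw [hBdef]; simp only [mul_assoc]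
    rw [h2, Matrix.trace]
    simp [Matrix.mul_diagonal, Matrix.diag, mul_comm]
  have htrPre : (P * exp K).trace.re = ∑ i, Real.exp (lam i) * p i := by
    rw [htrP, Complex.re_sum]
    exact Finset.sum_congr rfl fun i _ => Complex.re_ofReal_mul _ _
  -- diagonalization of K
  have hDlam : star U * K * U = Matrix.diagonal (fun i => ((lam i : ℝ) : ℂ)) := by
    have := hK.conjStarAlgAut_star_eigenvectorUnitary
    simp only [Unitary.conjStarAlgAut_apply, Unitary.coe_star, star_star] at this
    rw [← hUdef] at this
    exact this
  -- the conjugated matrix C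
  have hCsum : star U * (K + P) * U = Matrix.diagonal (fun i => ((lam i : ℝ) : ℂ)) + B := by
    rw [mul_add, add_mul, hDlam, hBdef]
  have hCW : star U * (K + P) * U = W * Matrix.diagonal (fun j => ((mu j : ℝ) : ℂ)) * star W := by
    conv_lhs => rw [hAh.spectral_theorem, Unitary.conjStarAlgAut_apply, ← hVdef]
    rw [hWdef, hWstar]
    have : Matrix.diagonal (RCLike.ofReal ∘ hAh.eigenvalues)
        = Matrix.diagonal (fun j => ((mu j : ℝ) : ℂ)) := by rfl
    rw [this]
    simp only [mul_assoc]
  -- row and column sums of |W i j|^2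
  have hrow : ∀ i, ∑ j, Complex.normSq (W i j) = 1 := by
    intro i
    have h := congrFun (congrFun hW1 i) i
    simp only [Matrix.mul_apply, Matrix.star_apply, Matrix.one_apply_eq] at h
    have h2 : ((∑ j, Complex.normSq (W i j) : ℝ) : ℂ) = 1 := by
      push_cast
      rw [← h]
      exact Finset.sum_congr rfl fun j _ => (Complex.mul_conj _).symm
    exact_mod_cast h2
  have hcol : ∀ j, ∑ i, Complex.normSq (W i j) = 1 := by
    intro j
    have h := congrFun (congrFun hW2 j) j
    simp only [Matrix.mul_apply, Matrix.star_apply, Matrix.one_apply_eq] at h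
    have h2 : ((∑ i, Complex.normSq (W i j) : ℝ) : ℂ) = 1 := by
      push_cast
      rw [← h]
      exact Finset.sum_congr rfl fun i _ => by
        rw [Complex.normSq_eq_conj_mul_self]; rfl
    exact_mod_cast h2
  -- diagonal entries of C two ways
  have hCentry : ∀ i, ((star U * (K + P) * U) i i).re = ∑ j, Complex.normSq (W i j) * mu j := by
    intro i
    rw [hCW]
    have h : (W * Matrix.diagonal (fun j => ((mu j : ℝ) : ℂ)) * star W) i i
        = ∑ j, (((Complex.normSq (W i j) * mu j : ℝ)) : ℂ) := by
      rw [Matrix.mul_apply]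
      refine Finset.sum_congr rfl fun j _ => ?_
      rw [Matrix.mul_diagonal, Matrix.star_apply, mul_right_comm, Complex.star_def,
        Complex.mul_conj, ← Complex.ofReal_mul]
    rw [h, Complex.re_sum]
    simp
  have hlp : ∀ i, lam i + p i = ∑ j, Complex.normSq (W i j) * mu j := by
    intro i
    have h1 : ((star U * (K + P) * U) i i).re = lam i + p i := by
      rw [hCsum]
      simp [Matrix.add_apply, Matrix.diagonal_apply_eq, hpdef]
    rw [← h1, hCentry i]
  -- Jensen inequality per row (Peierls)
  have jensen2 : ∀ i, Real.exp (∑ j, Complex.normSq (W i j) * mu j)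
      ≤ ∑ j, Complex.normSq (W i j) * Real.exp (mu j) := by
    intro i
    have := convexOn_exp.map_sum_le (t := Finset.univ)
      (w := fun j => Complex.normSq (W i j)) (p := mu)
      (fun j _ => Complex.normSq_nonneg _) (hrow i) (fun j _ => Set.mem_univ _)
    simpa [smul_eq_mul] using this
  have key2 : ∑ i, Real.exp (lam i + p i) ≤ T := by
    calc ∑ i, Real.exp (lam i + p i)
        ≤ ∑ i, ∑ j, Complex.normSq (W i j) * Real.exp (mu j) :=
          Finset.sum_le_sum fun i _ => by rw [hlp i]; exact jensen2 i
      _ = ∑ j, (∑ i, Complex.normSq (W i j)) * Real.exp (mu j) := by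
          rw [Finset.sum_comm]
          exact Finset.sum_congr rfl fun j _ => (Finset.sum_mul _ _ _).symm
      _ = T := by simp [hcol, hTdef]
  -- Jensen with Gibbs weights
  have hw1 : ∑ i, Real.exp (lam i) / Z = 1 := by
    rw [← Finset.sum_div, ← hZdef, div_self hZpos.ne']
  have jensen1 : Real.exp (∑ i, (Real.exp (lam i) / Z) * p i)
      ≤ ∑ i, (Real.exp (lam i) / Z) * Real.exp (p i) := by
    have := convexOn_exp.map_sum_le (t := Finset.univ)
      (w := fun i => Real.exp (lam i) / Z) (p := p)
      (fun i _ => by positivity) hw1 (fun i _ => Set.mem_univ _)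
    simpa [smul_eq_mul] using this
  -- final chain
  rw [hZ, hT, htrPre]
  have hsum_eq : (∑ i, Real.exp (lam i) * p i) / Z = ∑ i, (Real.exp (lam i) / Z) * p i := by
    rw [Finset.sum_div]
    exact Finset.sum_congr rfl fun i _ => by ring
  rw [hsum_eq]
  have hmid : ∑ i, (Real.exp (lam i) / Z) * Real.exp (p i)
      = (∑ i, Real.exp (lam i + p i)) / Z := by
    rw [Finset.sum_div]
    exact Finset.sum_congr rfl fun i _ => by rw [Real.exp_add]; ring
  calc ∑ i, (Real.exp (lam i) / Z) * p i
      = Real.log (Real.exp (∑ i, (Real.exp (lam i) / Z) * p i)) := (Real.log_exp _).symm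
    _ ≤ Real.log ((∑ i, Real.exp (lam i + p i)) / Z) := by
        apply Real.log_le_log (Real.exp_pos _)
        rw [← hmid]; exact jensen1
    _ ≤ Real.log (T / Z) := by
        apply Real.log_le_log
        · have : 0 < ∑ i, Real.exp (lam i + p i) :=
            Finset.sum_pos (fun i _ => Real.exp_pos _) ⟨⟨0, hn⟩, Finset.mem_univ _⟩
          positivity
        · exact div_le_div_of_nonneg_right key2 hZpos.le
end

section
/- Let K and P be Hermitian matrices of the same finite dimension. Then tr(P·exp(K)) / tr(exp(K)) ≤ tr(P·exp(K+P)) / tr(exp(K+P)). -/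
open Finset

lemma prod_sub_mul_exp_nonneg (x y : ℝ) : 0 ≤ (x - y) * (Real.exp x - Real.exp y) := by
  rcases le_total x y with h | h
  · have := Real.exp_le_exp.2 h
    nlinarith
  · have := Real.exp_le_exp.2 h
    nlinarith

lemma key_real {n : ℕ} (c : Fin n → Fin n → ℝ) (κ μ : Fin n → ℝ)
    (hc : ∀ i j, 0 ≤ c i j) (hrow : ∀ i, ∑ j, c i j = 1) (hcol : ∀ j, ∑ i, c i j = 1) :
    (∑ i, ∑ j, c i j * (μ i - κ j) * Real.exp (κ j)) / (∑ j, Real.exp (κ j)) ≤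
      (∑ i, ∑ j, c i j * (μ i - κ j) * Real.exp (μ i)) / (∑ i, Real.exp (μ i)) := by
  rcases Nat.eq_zero_or_pos n with hn | hn
  · subst hn; simp
  have hA : (0:ℝ) < ∑ j, Real.exp (κ j) :=
    Finset.sum_pos (fun j _ => Real.exp_pos _) (Finset.univ_nonempty_iff.2 ⟨⟨0, hn⟩⟩)
  have hB : (0:ℝ) < ∑ i, Real.exp (μ i) :=
    Finset.sum_pos (fun j _ => Real.exp_pos _) (Finset.univ_nonempty_iff.2 ⟨⟨0, hn⟩⟩)
  rw [div_le_div_iff₀ hA hB]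
  -- rewrite denominators as double sums
  have hBsum : (∑ i, Real.exp (μ i)) = ∑ p : Fin n × Fin n, c p.1 p.2 * Real.exp (μ p.1) := by
    rw [Fintype.sum_prod_type]
    refine Finset.sum_congr rfl fun i _ => ?_
    show Real.exp (μ i) = ∑ j, c i j * Real.exp (μ i)
    rw [← Finset.sum_mul, hrow i, one_mul]
  have hAsum : (∑ j, Real.exp (κ j)) = ∑ p : Fin n × Fin n, c p.1 p.2 * Real.exp (κ p.2) := by
    rw [Fintype.sum_prod_type_right]
    refine Finset.sum_congr rfl fun j _ => ?_
    show Real.exp (κ j) = ∑ i, c i j * Real.exp (κ j)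
    rw [← Finset.sum_mul, hcol j, one_mul]
  have hL : (∑ i, ∑ j, c i j * (μ i - κ j) * Real.exp (κ j))
      = ∑ p : Fin n × Fin n, c p.1 p.2 * (μ p.1 - κ p.2) * Real.exp (κ p.2) := by
    rw [Fintype.sum_prod_type]
  have hR : (∑ i, ∑ j, c i j * (μ i - κ j) * Real.exp (μ i))
      = ∑ p : Fin n × Fin n, c p.1 p.2 * (μ p.1 - κ p.2) * Real.exp (μ p.1) := by
    rw [Fintype.sum_prod_type]
  rw [hL, hR, hAsum, hBsum, Finset.sum_mul_sum, Finset.sum_mul_sum]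
  rw [← sub_nonneg, ← Finset.sum_sub_distrib]
  set g : Fin n × Fin n → Fin n × Fin n → ℝ := fun p q =>
    c p.1 p.2 * c q.1 q.2 * (μ p.1 - κ p.2) *
      (Real.exp (μ p.1 + κ q.2) - Real.exp (κ p.2 + μ q.1)) with hg
  have hterm : ∀ p q : Fin n × Fin n,
      (c p.1 p.2 * (μ p.1 - κ p.2) * Real.exp (μ p.1)) * (c q.1 q.2 * Real.exp (κ q.2))
        - (c p.1 p.2 * (μ p.1 - κ p.2) * Real.exp (κ p.2)) * (c q.1 q.2 * Real.exp (μ q.1))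
        = g p q := by
    intro p q
    simp only [hg, Real.exp_add]
    ring
  have hS : (0:ℝ) ≤ ∑ p : Fin n × Fin n, ∑ q : Fin n × Fin n, g p q := by
    have hswap : (∑ p : Fin n × Fin n, ∑ q, g q p) = ∑ p : Fin n × Fin n, ∑ q, g p q :=
      Finset.sum_comm
    have h2 : (∑ p : Fin n × Fin n, ∑ q, (g p q + g q p))
        = (∑ p : Fin n × Fin n, ∑ q, g p q) * 2 := by
      simp_rw [Finset.sum_add_distrib]
      rw [hswap]; ring
    have hnn : ∀ p q : Fin n × Fin n, 0 ≤ g p q + g q p := by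
      intro p q
      have key : g p q + g q p = c p.1 p.2 * c q.1 q.2 *
          (((μ p.1 + κ q.2) - (μ q.1 + κ p.2)) *
            (Real.exp (μ p.1 + κ q.2) - Real.exp (μ q.1 + κ p.2))) := by
        simp only [hg]
        rw [add_comm (κ p.2) (μ q.1), add_comm (κ q.2) (μ p.1)]
        ring
      rw [key]
      exact mul_nonneg (mul_nonneg (hc _ _) (hc _ _)) (prod_sub_mul_exp_nonneg _ _)
    nlinarith [Finset.sum_nonneg (fun p (_ : p ∈ Finset.univ) =>
      Finset.sum_nonneg (fun q (_ : q ∈ Finset.univ) => hnn p q)), h2]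
  calc (0:ℝ) ≤ ∑ p : Fin n × Fin n, ∑ q : Fin n × Fin n, g p q := hS
    _ = _ := by
        refine Finset.sum_congr rfl fun p _ => ?_
        rw [← Finset.sum_sub_distrib]
        exact Finset.sum_congr rfl fun q _ => (hterm p q).symm



open Matrix NormedSpace in
lemma exp_hermitian {n : ℕ} {A : Matrix (Fin n) (Fin n) ℂ} (hA : A.IsHermitian) :
    exp A = (hA.eigenvectorUnitary : Matrix (Fin n) (Fin n) ℂ) *
      diagonal (fun i => (Real.exp (hA.eigenvalues i) : ℂ)) *
      star (hA.eigenvectorUnitary : Matrix (Fin n) (Fin n) ℂ) := by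
  set U := (hA.eigenvectorUnitary : Matrix (Fin n) (Fin n) ℂ) with hU
  have h1 : star U * U = 1 := Matrix.mem_unitaryGroup_iff'.mp hA.eigenvectorUnitary.2
  have h2 : U * star U = 1 := Matrix.mem_unitaryGroup_iff.mp hA.eigenvectorUnitary.2
  have hUnit : IsUnit U := ⟨⟨U, star U, h2, h1⟩, rfl⟩
  have hUinv : U⁻¹ = star U := Matrix.inv_eq_left_inv h1
  have hst : A = U * diagonal (RCLike.ofReal ∘ hA.eigenvalues) * U⁻¹ := by
    rw [hUinv]; exact hA.spectral_theorem
  conv_lhs => rw [hst]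
  have hfun : exp (RCLike.ofReal ∘ hA.eigenvalues : Fin n → ℂ)
      = fun i => ((Real.exp (hA.eigenvalues i) : ℝ) : ℂ) := by
    rw [Pi.exp_def]
    funext i
    show exp ((hA.eigenvalues i : ℝ) : ℂ) = _
    rw [← Complex.exp_eq_exp_ℂ, ← Complex.ofReal_exp]
  rw [Matrix.exp_conj _ _ hUnit, hUinv, Matrix.exp_diagonal, hfun]

open Matrix in
lemma trace_diag_conj {n : ℕ} (W : Matrix (Fin n) (Fin n) ℂ) (d e : Fin n → ℂ) :
    (diagonal e * W * diagonal d * star W).trace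
      = ∑ i, ∑ j, e i * d j * (Complex.normSq (W i j) : ℂ) := by
  have : (diagonal e * W * diagonal d * star W).trace
      = ∑ i, ∑ j, (diagonal e * W * diagonal d) i j * (star W) j i := by
    simp [Matrix.trace, Matrix.diag, Matrix.mul_apply]
  rw [this]
  refine Finset.sum_congr rfl fun i _ => Finset.sum_congr rfl fun j _ => ?_
  rw [Matrix.mul_diagonal, Matrix.diagonal_mul, Matrix.star_apply, ← Complex.mul_conj]
  rw [Complex.star_def]
  ring

open Matrix in
lemma trace_conj_pair {n : ℕ} (U V : Matrix (Fin n) (Fin n) ℂ)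
    (hV1 : star V * V = 1) (hV2 : V * star V = 1) (d e : Fin n → ℂ) :
    ((V * diagonal e * star V) * (U * diagonal d * star U)).trace
      = ∑ i, ∑ j, e i * d j * (Complex.normSq ((star V * U) i j) : ℂ) := by
  set W := star V * U with hW
  have hM : (V * diagonal e * star V) * (U * diagonal d * star U)
      = V * (diagonal e * W * diagonal d * star W) * star V := by
    simp only [hW, Matrix.star_mul, star_star]
    simp only [mul_assoc]
    rw [hV2, mul_one]
  rw [hM, Matrix.trace_mul_cycle, ← mul_assoc, hV1, one_mul, trace_diag_conj]


open Matrix NormedSpace Finset in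
/-- Double Peierls–Bogoliubov estimate: for Hermitian matrices `K`, `P`,
`tr(P e^K)/tr(e^K) ≤ tr(P e^{K+P})/tr(e^{K+P})`. -/
theorem stmt2 {n : ℕ} (K P : Matrix (Fin n) (Fin n) ℂ)
    (hK : K.IsHermitian) (hP : P.IsHermitian) :
    (P * NormedSpace.exp K).trace.re / (NormedSpace.exp K).trace.re ≤
      (P * NormedSpace.exp (K + P)).trace.re / (NormedSpace.exp (K + P)).trace.re := by
  have hM : (K + P).IsHermitian := hK.add hP
  set U := (hK.eigenvectorUnitary : Matrix (Fin n) (Fin n) ℂ) with hUdef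
  set V := (hM.eigenvectorUnitary : Matrix (Fin n) (Fin n) ℂ) with hVdef
  set κ := hK.eigenvalues with hκdef
  set μ := hM.eigenvalues with hμdef
  have hU1 : star U * U = 1 := Matrix.mem_unitaryGroup_iff'.mp hK.eigenvectorUnitary.2
  have hU2 : U * star U = 1 := Matrix.mem_unitaryGroup_iff.mp hK.eigenvectorUnitary.2
  have hV1 : star V * V = 1 := Matrix.mem_unitaryGroup_iff'.mp hM.eigenvectorUnitary.2
  have hV2 : V * star V = 1 := Matrix.mem_unitaryGroup_iff.mp hM.eigenvectorUnitary.2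
  set W := star V * U with hWdef
  have hW2 : W * star W = 1 := by
    have h : W * star W = star V * (U * star U) * V := by
      rw [hWdef, Matrix.star_mul, star_star]; noncomm_ring
    rw [h, hU2, mul_one, hV1]
  have hW1 : star W * W = 1 := by
    have h : star W * W = star U * (V * star V) * U := by
      rw [hWdef, Matrix.star_mul, star_star]; noncomm_ring
    rw [h, hV2, mul_one, hU1]
  set c : Fin n → Fin n → ℝ := fun i j => Complex.normSq (W i j) with hcdef
  have hc : ∀ i j, 0 ≤ c i j := fun i j => Complex.normSq_nonneg _
  have hrow : ∀ i, ∑ j, c i j = 1 := by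
    intro i
    have h := congrArg (fun M : Matrix (Fin n) (Fin n) ℂ => M i i) hW2
    simp only [Matrix.mul_apply, Matrix.one_apply_eq, Matrix.star_apply, Complex.star_def,
      Complex.mul_conj] at h
    have h2 : ((∑ j, c i j : ℝ) : ℂ) = ((1:ℝ):ℂ) := by push_cast; simpa [hcdef] using h
    exact_mod_cast h2
  have hcol : ∀ j, ∑ i, c i j = 1 := by
    intro j
    have h := congrArg (fun M : Matrix (Fin n) (Fin n) ℂ => M j j) hW1
    simp only [Matrix.mul_apply, Matrix.one_apply_eq, Matrix.star_apply, Complex.star_def,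
      Complex.mul_conj, mul_comm] at h
    have h2 : ((∑ i, c i j : ℝ) : ℂ) = ((1:ℝ):ℂ) := by push_cast; simpa [hcdef] using h
    exact_mod_cast h2
  have heK : exp K = U * diagonal (fun i => (Real.exp (κ i) : ℂ)) * star U := exp_hermitian hK
  have heM : exp (K + P) = V * diagonal (fun i => (Real.exp (μ i) : ℂ)) * star V :=
    exp_hermitian hM
  have hKsp : K = U * diagonal (RCLike.ofReal ∘ κ) * star U := hK.spectral_theorem
  have hMsp : K + P = V * diagonal (RCLike.ofReal ∘ μ) * star V := hM.spectral_theorem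
  -- traces of exponentials
  have ttrK : (exp K).trace = ((∑ j, Real.exp (κ j) : ℝ) : ℂ) := by
    rw [heK, Matrix.trace_mul_cycle, hU1, one_mul, Matrix.trace_diagonal]
    push_cast
    rfl
  have ttrM : (exp (K + P)).trace = ((∑ j, Real.exp (μ j) : ℝ) : ℂ) := by
    rw [heM, Matrix.trace_mul_cycle, hV1, one_mul, Matrix.trace_diagonal]
    push_cast
    rfl
  -- mixed traces
  have t1 : ((K + P) * exp K).trace
      = ∑ i, ∑ j, (μ i : ℂ) * (Real.exp (κ j) : ℂ) * ((c i j : ℝ) : ℂ) := by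
    rw [hMsp, heK, trace_conj_pair U V hV1 hV2]
    rfl
  have t2 : (K * exp K).trace = ∑ j, (κ j : ℂ) * ((Real.exp (κ j) : ℝ) : ℂ) := by
    rw [heK, hKsp, trace_conj_pair U U hU1 hU2, hU1]
    simp [Matrix.one_apply, apply_ite Complex.normSq, apply_ite Complex.ofReal, mul_ite,
      mul_one, mul_zero, Finset.sum_ite_eq, Finset.sum_ite_eq', Complex.ofReal_exp]
  have t4 : ((K + P) * exp (K + P)).trace = ∑ j, (μ j : ℂ) * ((Real.exp (μ j) : ℝ) : ℂ) := by
    rw [heM, hMsp, trace_conj_pair V V hV1 hV2, hV1]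
    simp [Matrix.one_apply, apply_ite Complex.normSq, apply_ite Complex.ofReal, mul_ite,
      mul_one, mul_zero, Finset.sum_ite_eq, Finset.sum_ite_eq', Complex.ofReal_exp]
  have hWstar : star U * V = star W := by
    rw [hWdef, Matrix.star_mul, star_star]
  have t3 : (K * exp (K + P)).trace
      = ∑ i, ∑ j, (κ i : ℂ) * (Real.exp (μ j) : ℂ) * ((c j i : ℝ) : ℂ) := by
    rw [heM, hKsp, trace_conj_pair V U hU1 hU2, hWstar]
    refine Finset.sum_congr rfl fun i _ => Finset.sum_congr rfl fun j _ => ?_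
    rw [Matrix.star_apply]
    simp [hcdef, Complex.normSq_conj]
  -- numerators
  have hsplitK : P * exp K = (K + P) * exp K - K * exp K := by
    rw [add_mul]; abel
  have hsplitM : P * exp (K + P) = (K + P) * exp (K + P) - K * exp (K + P) := by
    rw [add_mul]; abel
  have hre1 : (∑ i, ∑ j, c i j * (μ i - κ j) * Real.exp (κ j))
      = (∑ i, ∑ j, μ i * Real.exp (κ j) * c i j) - ∑ j, κ j * Real.exp (κ j) := by
    have hcolsum : ∀ j, ∑ i, c i j * (κ j * Real.exp (κ j)) = κ j * Real.exp (κ j) := by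
      intro j
      rw [← Finset.sum_mul, hcol j, one_mul]
    calc (∑ i, ∑ j, c i j * (μ i - κ j) * Real.exp (κ j))
        = (∑ i, ∑ j, μ i * Real.exp (κ j) * c i j)
          - ∑ i, ∑ j, c i j * (κ j * Real.exp (κ j)) := by
          rw [← Finset.sum_sub_distrib]
          refine Finset.sum_congr rfl fun i _ => ?_
          rw [← Finset.sum_sub_distrib]
          refine Finset.sum_congr rfl fun j _ => ?_
          ring
      _ = _ := by
          congr 1
          rw [Finset.sum_comm]
          exact Finset.sum_congr rfl fun j _ => hcolsum j
  have hre2 : (∑ i, ∑ j, c i j * (μ i - κ j) * Real.exp (μ i))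
      = (∑ i, μ i * Real.exp (μ i)) - ∑ i, ∑ j, κ i * Real.exp (μ j) * c j i := by
    have hrowsum : ∀ i, ∑ j, c i j * (μ i * Real.exp (μ i)) = μ i * Real.exp (μ i) := by
      intro i
      rw [← Finset.sum_mul, hrow i, one_mul]
    calc (∑ i, ∑ j, c i j * (μ i - κ j) * Real.exp (μ i))
        = (∑ i, ∑ j, c i j * (μ i * Real.exp (μ i)))
          - ∑ i, ∑ j, c i j * κ j * Real.exp (μ i) := by
          rw [← Finset.sum_sub_distrib]
          refine Finset.sum_congr rfl fun i _ => ?_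
          rw [← Finset.sum_sub_distrib]
          refine Finset.sum_congr rfl fun j _ => ?_
          ring
      _ = _ := by
          congr 1
          · exact Finset.sum_congr rfl fun i _ => hrowsum i
          · rw [Finset.sum_comm]
            refine Finset.sum_congr rfl fun i _ => Finset.sum_congr rfl fun j _ => ?_
            ring
  have hnum1 : (P * exp K).trace
      = ((∑ i, ∑ j, c i j * (μ i - κ j) * Real.exp (κ j) : ℝ) : ℂ) := by
    rw [hsplitK, Matrix.trace_sub, t1, t2, hre1]
    push_cast
    rfl
  have hnum2 : (P * exp (K + P)).trace
      = ((∑ i, ∑ j, c i j * (μ i - κ j) * Real.exp (μ i) : ℝ) : ℂ) := by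
    rw [hsplitM, Matrix.trace_sub, t4, t3, hre2]
    push_cast
    rfl
  rw [hnum1, hnum2, ttrK, ttrM, Complex.ofReal_re, Complex.ofReal_re, Complex.ofReal_re,
    Complex.ofReal_re]
  exact key_real c κ μ hc hrow hcol
end

section
/- Let K and P be positive semidefinite Hermitian matrices with K positive definite and P positive definite. Then tr(K·log K − K·log P) ≥ tr(K − P). -/
open Matrix Complex

private lemma klein_scalar {x y : ℝ} (hx : 0 < x) (hy : 0 < y) :
    x - y ≤ x * Real.log x - x * Real.log y := by
  have h := Real.log_le_sub_one_of_pos (div_pos hy hx)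
  rw [Real.log_div hy.ne' hx.ne'] at h
  have h2 : x * (Real.log y - Real.log x) ≤ x * (y / x - 1) :=
    mul_le_mul_of_nonneg_left h hx.le
  have h3 : x * (y / x - 1) = y - x := by field_simp
  nlinarith

private lemma trace_formula {n : ℕ} (W : Matrix (Fin n) (Fin n) ℂ) (d e : Fin n → ℝ) :
    (diagonal (Complex.ofReal ∘ d) * (star W * diagonal (Complex.ofReal ∘ e) * W)).trace
      = ((∑ i, ∑ j, d i * e j * Complex.normSq (W j i) : ℝ) : ℂ) := by
  have hentry : ∀ i, (star W * diagonal (Complex.ofReal ∘ e) * W) i i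
      = ∑ j, ((e j * Complex.normSq (W j i) : ℝ) : ℂ) := by
    intro i
    rw [Matrix.mul_apply]
    congr 1; ext j
    rw [Matrix.mul_diagonal, Matrix.star_eq_conjTranspose, Matrix.conjTranspose_apply]
    push_cast
    rw [← Complex.normSq_conj (W j i), ← Complex.mul_conj ((starRingEnd ℂ) (W j i)),
      Complex.conj_conj]
    simp only [Complex.star_def, Function.comp_apply]
    ring
  rw [Matrix.trace]
  push_cast
  congr 1; ext i
  rw [Matrix.diag, Matrix.diagonal_mul, hentry, Finset.mul_sum]
  push_cast
  congr 1; ext j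
  simp only [Function.comp_apply]
  ring

private lemma trace_conj_prod {n : ℕ} (U V : Matrix (Fin n) (Fin n) ℂ) (d e : Fin n → ℝ) :
    ((U * diagonal (Complex.ofReal ∘ d) * star U)
        * (V * diagonal (Complex.ofReal ∘ e) * star V)).trace
      = ((∑ i, ∑ j, d i * e j * Complex.normSq ((star V * U) j i) : ℝ) : ℂ) := by
  have h1 : (U * diagonal (Complex.ofReal ∘ d) * star U)
        * (V * diagonal (Complex.ofReal ∘ e) * star V)
      = U * (diagonal (Complex.ofReal ∘ d) * star U
        * (V * diagonal (Complex.ofReal ∘ e) * star V)) := by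
    noncomm_ring
  rw [h1, Matrix.trace_mul_comm]
  have h2 : diagonal (Complex.ofReal ∘ d) * star U
        * (V * diagonal (Complex.ofReal ∘ e) * star V) * U
      = diagonal (Complex.ofReal ∘ d)
        * (star (star V * U) * diagonal (Complex.ofReal ∘ e) * (star V * U)) := by
    simp only [Matrix.star_mul, star_star]
    noncomm_ring
  rw [h2, trace_formula]

open scoped ComplexOrder
/-- Klein's inequality: for positive definite Hermitian matrices `K`, `P`,
`tr(K log K − K log P) ≥ tr(K − P)` (the matrix logarithm is defined by the
spectral decomposition, via the Hermitian functional calculus). -/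
theorem stmt3 {n : ℕ} (K P : Matrix (Fin n) (Fin n) ℂ)
    (hK : K.PosDef) (hP : P.PosDef) :
    (K - P).trace.re ≤
      (K * hK.1.cfc Real.log - K * hP.1.cfc Real.log).trace.re := by
  have hcoe : ((RCLike.ofReal : ℝ → ℂ)) = Complex.ofReal := rfl
  set U : Matrix (Fin n) (Fin n) ℂ := (hK.1.eigenvectorUnitary : Matrix (Fin n) (Fin n) ℂ)
    with hUdef
  set V : Matrix (Fin n) (Fin n) ℂ := (hP.1.eigenvectorUnitary : Matrix (Fin n) (Fin n) ℂ)
    with hVdef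
  set lam : Fin n → ℝ := hK.1.eigenvalues with hlamdef
  set mu : Fin n → ℝ := hP.1.eigenvalues with hmudef
  have hU1 : U * star U = 1 := Matrix.mem_unitaryGroup_iff.mp (hK.1.eigenvectorUnitary).2
  have hU2 : star U * U = 1 := Matrix.mem_unitaryGroup_iff'.mp (hK.1.eigenvectorUnitary).2
  have hV1 : V * star V = 1 := Matrix.mem_unitaryGroup_iff.mp (hP.1.eigenvectorUnitary).2
  have hV2 : star V * V = 1 := Matrix.mem_unitaryGroup_iff'.mp (hP.1.eigenvectorUnitary).2
  set W : Matrix (Fin n) (Fin n) ℂ := star V * U with hWdef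
  have hW1 : W * star W = 1 := by
    rw [hWdef, Matrix.star_mul, star_star, mul_assoc, ← mul_assoc U, hU1, one_mul, hV2]
  have hW2 : star W * W = 1 := by
    rw [hWdef, Matrix.star_mul, star_star, mul_assoc, ← mul_assoc V, hV1, one_mul, hU2]
  -- column and row sums of |W j i|^2
  have hcol : ∀ i, ∑ j, Complex.normSq (W j i) = 1 := by
    intro i
    have h : (star W * W) i i = (1 : Matrix (Fin n) (Fin n) ℂ) i i := by rw [hW2]
    rw [Matrix.mul_apply, Matrix.one_apply_eq] at h
    have h' : (((∑ j, Complex.normSq (W j i) : ℝ)) : ℂ) = 1 := by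
      rw [← h]
      push_cast
      refine Finset.sum_congr rfl fun j _ => ?_
      rw [Matrix.star_eq_conjTranspose, Matrix.conjTranspose_apply,
        ← Complex.normSq_conj (W j i), ← Complex.mul_conj ((starRingEnd ℂ) (W j i)),
        Complex.conj_conj]
      rfl
    exact_mod_cast h'
  have hrow : ∀ j, ∑ i, Complex.normSq (W j i) = 1 := by
    intro j
    have h : (W * star W) j j = (1 : Matrix (Fin n) (Fin n) ℂ) j j := by rw [hW1]
    rw [Matrix.mul_apply, Matrix.one_apply_eq] at h
    have h' : (((∑ i, Complex.normSq (W j i) : ℝ)) : ℂ) = 1 := by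
      rw [← h]
      push_cast
      refine Finset.sum_congr rfl fun i _ => ?_
      rw [Matrix.star_eq_conjTranspose, Matrix.conjTranspose_apply,
        ← Complex.mul_conj (W j i)]
      rfl
    exact_mod_cast h'
  have hKmat : K = U * diagonal (Complex.ofReal ∘ lam) * star U := hK.1.spectral_theorem
  have hcfcK : hK.1.cfc Real.log
      = U * diagonal (Complex.ofReal ∘ (Real.log ∘ lam)) * star U := rfl
  have hcfcP : hP.1.cfc Real.log
      = V * diagonal (Complex.ofReal ∘ (Real.log ∘ mu)) * star V := rfl
  have hlam_pos : ∀ i, 0 < lam i := hK.eigenvalues_pos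
  have hmu_pos : ∀ i, 0 < mu i := hP.eigenvalues_pos
  -- trace of K and P
  have hKtr : K.trace = ((∑ i, lam i : ℝ) : ℂ) := by
    conv_lhs => rw [hKmat]
    rw [Matrix.trace_mul_comm, ← mul_assoc, hU2, one_mul, Matrix.trace_diagonal]
    push_cast
    rfl
  have hPtr : P.trace = ((∑ i, mu i : ℝ) : ℂ) := by
    conv_lhs => rw [show P = V * diagonal (Complex.ofReal ∘ mu) * star V from hP.1.spectral_theorem]
    rw [Matrix.trace_mul_comm, ← mul_assoc, hV2, one_mul, Matrix.trace_diagonal]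
    push_cast
    rfl
  -- trace of K * log K
  have hKK : (K * hK.1.cfc Real.log).trace
      = ((∑ i, lam i * Real.log (lam i) : ℝ) : ℂ) := by
    conv_lhs => rw [hcfcK]
    conv_lhs => rw [hKmat]
    rw [trace_conj_prod U U lam (Real.log ∘ lam)]
    simp only [hU2]
    congr 1
    refine Finset.sum_congr rfl fun i _ => ?_
    rw [Finset.sum_eq_single i]
    · simp [Matrix.one_apply_eq]
    · intro j _ hji
      simp [Matrix.one_apply_ne hji]
    · simp
  -- trace of K * log P
  have hKP : (K * hP.1.cfc Real.log).trace
      = ((∑ i, ∑ j, lam i * Real.log (mu j) * Complex.normSq (W j i) : ℝ) : ℂ) := by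
    conv_lhs => rw [hcfcP]
    conv_lhs => rw [hKmat]
    rw [hWdef]
    exact trace_conj_prod U V lam (Real.log ∘ mu)
  rw [Matrix.trace_sub, Matrix.trace_sub, hKtr, hPtr, hKK, hKP]
  rw [Complex.sub_re, Complex.sub_re]
  simp only [Complex.ofReal_re]
  -- now a purely real inequality
  have e1 : ∑ i, lam i = ∑ i, ∑ j, lam i * Complex.normSq (W j i) := by
    refine Finset.sum_congr rfl fun i _ => ?_
    rw [← Finset.mul_sum, hcol i, mul_one]
  have e2 : ∑ j, mu j = ∑ i, ∑ j, mu j * Complex.normSq (W j i) := by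
    rw [Finset.sum_comm]
    refine Finset.sum_congr rfl fun j _ => ?_
    rw [← Finset.mul_sum, hrow j, mul_one]
  have e3 : ∑ i, lam i * Real.log (lam i)
      = ∑ i, ∑ j, lam i * Real.log (lam i) * Complex.normSq (W j i) := by
    refine Finset.sum_congr rfl fun i _ => ?_
    rw [← Finset.mul_sum, hcol i, mul_one]
  rw [e1, e2, e3, ← Finset.sum_sub_distrib, ← Finset.sum_sub_distrib]
  refine Finset.sum_le_sum fun i _ => ?_
  rw [← Finset.sum_sub_distrib, ← Finset.sum_sub_distrib]
  refine Finset.sum_le_sum fun j _ => ?_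
  have := klein_scalar (hlam_pos i) (hmu_pos j)
  nlinarith [Complex.normSq_nonneg (W j i),
    mul_le_mul_of_nonneg_right this (Complex.normSq_nonneg (W j i))]
end

section
/- Let H be a Hermitian matrix and β > 0. Define the free energy functional F(ρ) = tr(H·ρ) − S(ρ)/β where S(ρ) = −tr(ρ·log ρ) is the von Neumann entropy. Then for every density matrix ρ (positive semidefinite Hermitian with trace 1), F(ρ) ≥ F(ρ_H), where ρ_H = exp(−β·H)/tr(exp(−β·H)) is the Gibbs state. In particular F(ρ_H) = −(1/β)·log tr(exp(−β·H)). -/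
open scoped ComplexOrder

open Matrix

section Helpers
variable {n : ℕ}

lemma trace_mul_triple (ρ' U : Matrix (Fin n) (Fin n) ℂ) (d : Fin n → ℂ) :
    (ρ' * (U * diagonal d * star U)).trace = ∑ j, d j * (star U * ρ' * U) j j := by
  rw [Matrix.trace_mul_comm]
  have h1 : U * diagonal d * star U * ρ' = U * (diagonal d * (star U * ρ')) := by
    simp only [mul_assoc]
  rw [h1, Matrix.trace_mul_comm, mul_assoc]
  simp [Matrix.trace, Matrix.diag, Matrix.diagonal_mul, mul_assoc]

lemma conj_diag_apply (A : Matrix (Fin n) (Fin n) ℂ) (d : Fin n → ℂ) (j : Fin n) :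
    (A * diagonal d * star A) j j = ∑ i, d i * (Complex.normSq (A j i) : ℂ) := by
  simp only [Matrix.mul_apply, Matrix.diagonal, Matrix.star_apply, Matrix.of_apply,
    Finset.sum_ite_eq', Finset.mem_univ, if_true, mul_ite, mul_zero]
  refine Finset.sum_congr rfl fun i _ => ?_
  rw [← Complex.mul_conj (A j i)]
  simp only [Complex.star_def]
  ring

lemma conj_reduce {U D : Matrix (Fin n) (Fin n) ℂ} (hU1 : star U * U = 1) :
    star U * (U * D * star U) * U = D := by
  simp only [mul_assoc]
  rw [hU1, mul_one, ← mul_assoc, hU1, one_mul]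

lemma klein_pt {x y : ℝ} (hx : 0 ≤ x) (hy : 0 < y) :
    x - y ≤ x * Real.log x - x * Real.log y := by
  rcases eq_or_lt_of_le hx with h | h
  · simp [← h]; linarith
  · have h1 := Real.log_le_sub_one_of_pos (div_pos hy h)
    rw [Real.log_div (ne_of_gt hy) (ne_of_gt h)] at h1
    have h2 := mul_le_mul_of_nonneg_left h1 (le_of_lt h)
    have h3 : x * (y / x - 1) = y - x := by field_simp
    nlinarith

lemma klein_sum (p q : Fin n → ℝ) (c : Fin n → Fin n → ℝ)
    (hp : ∀ i, 0 ≤ p i) (hq : ∀ j, 0 < q j)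
    (hc : ∀ j i, 0 ≤ c j i) (hrow : ∀ j, ∑ i, c j i = 1) (hcol : ∀ i, ∑ j, c j i = 1)
    (hpsum : ∑ i, p i = 1) (hqsum : ∑ j, q j = 1) :
    ∑ j, (∑ i, p i * c j i) * Real.log (q j) ≤ ∑ i, p i * Real.log (p i) := by
  have key : ∀ j i, c j i * (p i * Real.log (q j)) ≤
      c j i * (p i * Real.log (p i)) - c j i * (p i - q j) := by
    intro j i
    have h1 := klein_pt (hp i) (hq j)
    nlinarith [mul_le_mul_of_nonneg_left h1 (hc j i)]
  have e0 : ∑ j, (∑ i, p i * c j i) * Real.log (q j)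
      = ∑ j, ∑ i, c j i * (p i * Real.log (q j)) := by
    refine Finset.sum_congr rfl fun j _ => ?_
    rw [Finset.sum_mul]
    exact Finset.sum_congr rfl fun i _ => by ring
  have e1 : ∑ j, ∑ i, c j i * (p i * Real.log (p i)) = ∑ i, p i * Real.log (p i) := by
    rw [Finset.sum_comm]
    refine Finset.sum_congr rfl fun i _ => ?_
    rw [← Finset.sum_mul, hcol i, one_mul]
  have e2 : ∑ j, ∑ i, c j i * (p i - q j) = 0 := by
    have h3 : ∀ j, ∑ i, c j i * (p i - q j) = (∑ i, c j i * p i) - q j := by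
      intro j
      have ha : ∑ i, c j i * (p i - q j) = (∑ i, c j i * p i) - (∑ i, c j i) * q j := by
        rw [Finset.sum_mul, ← Finset.sum_sub_distrib]
        exact Finset.sum_congr rfl fun i _ => by ring
      rw [ha, hrow j, one_mul]
    simp only [h3]
    rw [Finset.sum_sub_distrib, hqsum]
    have h4 : ∑ j, ∑ i, c j i * p i = 1 := by
      rw [Finset.sum_comm]
      have h5 : ∀ i, ∑ j, c j i * p i = p i := by
        intro i; rw [← Finset.sum_mul, hcol i, one_mul]
      simp only [h5, hpsum]
    rw [h4]; ring
  calc ∑ j, (∑ i, p i * c j i) * Real.log (q j)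
      = ∑ j, ∑ i, c j i * (p i * Real.log (q j)) := e0
    _ ≤ ∑ j, ∑ i, (c j i * (p i * Real.log (p i)) - c j i * (p i - q j)) :=
        Finset.sum_le_sum fun j _ => Finset.sum_le_sum fun i _ => key j i
    _ = (∑ j, ∑ i, c j i * (p i * Real.log (p i))) - ∑ j, ∑ i, c j i * (p i - q j) := by
        rw [← Finset.sum_sub_distrib]
        exact Finset.sum_congr rfl fun j _ => by rw [Finset.sum_sub_distrib]
    _ = ∑ i, p i * Real.log (p i) := by rw [e1, e2, sub_zero]

end Helpers

/-- The von Neumann entropy `S(ρ) = −tr(ρ log ρ)` of a Hermitian matrix,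
with the matrix logarithm defined by the Hermitian functional calculus
(`Real.log 0 = 0` implements the convention `0·log 0 = 0`). -/
noncomputable def vnEntropy {n : ℕ} {ρ : Matrix (Fin n) (Fin n) ℂ}
    (hρ : ρ.IsHermitian) : ℝ :=
  -(ρ * hρ.cfc Real.log).trace.re

/-- Gibbs variational principle: the Gibbs state `ρ_H = e^{−βH}/tr e^{−βH}` minimizes the
free energy functional `F(ρ) = tr(Hρ) − S(ρ)/β` over density matrices, and its free energy
equals `−(1/β) log tr(e^{−βH})`. -/
theorem stmt4 {n : ℕ} (H G ρH ρ : Matrix (Fin n) (Fin n) ℂ) (hH : H.IsHermitian)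
    (β : ℝ) (hβ : 0 < β)
    (hG : G = NormedSpace.exp ((-β : ℂ) • H)) (hρHdef : ρH = G.trace⁻¹ • G)
    (hρH : ρH.IsHermitian)
    (hρ : ρ.PosSemidef) (hρtr : ρ.trace = 1) :
    (H * ρH).trace.re - vnEntropy hρH / β ≤ (H * ρ).trace.re - vnEntropy hρ.1 / β ∧
      (H * ρH).trace.re - vnEntropy hρH / β = -(1 / β) * Real.log G.trace.re := by
  have hβ' : β ≠ 0 := ne_of_gt hβ
  rcases Nat.eq_zero_or_pos n with hn | hn
  · exfalso
    subst hn
    rw [Matrix.trace] at hρtr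
    simpa using hρtr
  have hne : Nonempty (Fin n) := Fin.pos_iff_nonempty.mp hn
  set U : Matrix (Fin n) (Fin n) ℂ := (hH.eigenvectorUnitary : Matrix (Fin n) (Fin n) ℂ) with hUdef
  set lam : Fin n → ℝ := hH.eigenvalues with hlamdef
  have hU1 : star U * U = 1 := Unitary.coe_star_mul_self hH.eigenvectorUnitary
  have hU2 : U * star U = 1 := Unitary.coe_mul_star_self hH.eigenvectorUnitary
  have hHdiag : H = U * diagonal (fun i => (lam i : ℂ)) * star U := hH.spectral_theorem
  have hUisunit : IsUnit U := ⟨⟨U, star U, hU2, hU1⟩, rfl⟩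
  have hUinv : U⁻¹ = star U := Matrix.inv_eq_left_inv hU1
  have hGdiag : G = U * diagonal (fun i => ((Real.exp (-β * lam i) : ℝ) : ℂ)) * star U := by
    rw [hG]
    have hdiagsmul : (-β : ℂ) • diagonal (fun i => ((lam i : ℝ) : ℂ))
        = diagonal (fun i => ((-β * lam i : ℝ) : ℂ)) := by
      rw [← Matrix.diagonal_smul]
      refine congrArg diagonal (funext fun i => ?_)
      show (-β : ℂ) * (lam i : ℂ) = ((-β * lam i : ℝ) : ℂ)
      push_cast
      ring
    have h1 : (-β : ℂ) • H = U * diagonal (fun i => ((-β * lam i : ℝ) : ℂ)) * star U := by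
      rw [hHdiag, ← smul_mul_assoc, ← mul_smul_comm, hdiagsmul]
    rw [h1, ← hUinv, Matrix.exp_conj U _ hUisunit, Matrix.exp_diagonal, hUinv]
    have h2 : NormedSpace.exp (fun i => ((-β * lam i : ℝ) : ℂ))
        = fun i => ((Real.exp (-β * lam i) : ℝ) : ℂ) := by
      rw [Pi.exp_def]
      funext i
      rw [← Complex.exp_eq_exp_ℂ, ← Complex.ofReal_exp]
    rw [h2]
  set z : ℝ := ∑ i, Real.exp (-β * lam i) with hzdef
  have hzpos : 0 < z := Finset.sum_pos (fun i _ => Real.exp_pos _) Finset.univ_nonempty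
  have hGtr : G.trace = (z : ℂ) := by
    rw [hGdiag, Matrix.trace_mul_cycle, hU1, one_mul, Matrix.trace_diagonal]
    norm_cast
  have hGtrRe : G.trace.re = z := by rw [hGtr, Complex.ofReal_re]
  set L : ℝ := Real.log z with hLdef
  set q : Fin n → ℝ := fun i => Real.exp (-β * lam i) / z with hqdef
  have hq0 : ∀ j, 0 < q j := fun j => div_pos (Real.exp_pos _) hzpos
  have hqsum : ∑ j, q j = 1 := by
    rw [hqdef, ← Finset.sum_div, ← hzdef, div_self (ne_of_gt hzpos)]
  have hlogq : ∀ j, Real.log (q j) = -β * lam j - L := by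
    intro j
    rw [hqdef]
    simp only
    rw [Real.log_div (ne_of_gt (Real.exp_pos _)) (ne_of_gt hzpos), Real.log_exp, hLdef]
  have hρHdiag : ρH = U * diagonal (fun i => ((q i : ℝ) : ℂ)) * star U := by
    have hd : (z : ℂ)⁻¹ • diagonal (fun i => ((Real.exp (-β * lam i) : ℝ) : ℂ))
        = diagonal (fun i => ((q i : ℝ) : ℂ)) := by
      rw [← Matrix.diagonal_smul]
      refine congrArg diagonal (funext fun i => ?_)
      show (z : ℂ)⁻¹ * ((Real.exp (-β * lam i) : ℝ) : ℂ) = ((q i : ℝ) : ℂ)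
      rw [hqdef]
      push_cast
      ring
    rw [hρHdef, hGtr, hGdiag, ← smul_mul_assoc, ← mul_smul_comm, hd]
  have hstarρH : star U * ρH * U = diagonal (fun j => ((q j : ℝ) : ℂ)) := by
    rw [hρHdiag]; exact conj_reduce hU1
  have hρHcfc : hρH.cfc Real.log
      = U * diagonal (fun i => ((-β * lam i - L : ℝ) : ℂ)) * star U := by
    have hsa : IsSelfAdjoint H := hH
    have hρHcfcH : ρH = hH.cfc (fun x => Real.exp (-β * x) / z) := by
      rw [hρHdiag]; rfl
    have hgc : ContinuousOn (fun x : ℝ => Real.exp (-β * x) / z) (spectrum ℝ H) :=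
      (Continuous.div_const (Real.continuous_exp.comp (continuous_const.mul continuous_id)) z).continuousOn
    have hlogc : ContinuousOn Real.log
        ((fun x : ℝ => Real.exp (-β * x) / z) '' spectrum ℝ H) := by
      refine Real.continuousOn_log.mono ?_
      rintro y ⟨x, -, rfl⟩
      exact Set.mem_compl_singleton_iff.mpr (ne_of_gt (div_pos (Real.exp_pos _) hzpos))
    calc hρH.cfc Real.log = cfc Real.log ρH := (hρH.cfc_eq Real.log).symm
      _ = cfc Real.log (cfc (fun x => Real.exp (-β * x) / z) H) := by
          rw [show cfc (fun x => Real.exp (-β * x) / z) H = ρH from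
            (hH.cfc_eq _).trans hρHcfcH.symm]
      _ = cfc (Real.log ∘ (fun x => Real.exp (-β * x) / z)) H :=
          (cfc_comp Real.log _ H hsa hlogc hgc).symm
      _ = hH.cfc (Real.log ∘ (fun x => Real.exp (-β * x) / z)) := hH.cfc_eq _
      _ = U * diagonal (fun i => ((-β * lam i - L : ℝ) : ℂ)) * star U := by
          show U * diagonal (RCLike.ofReal ∘ (Real.log ∘ fun x => Real.exp (-β * x) / z) ∘ lam)
              * star U = _
          refine congrArg (fun D => U * D * star U) (congrArg diagonal (funext fun i => ?_))
          show ((Real.log (Real.exp (-β * lam i) / z) : ℝ) : ℂ) = ((-β * lam i - L : ℝ) : ℂ)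
          rw [Real.log_div (ne_of_gt (Real.exp_pos _)) (ne_of_gt hzpos), Real.log_exp, hLdef]
  set V : Matrix (Fin n) (Fin n) ℂ := (hρ.1.eigenvectorUnitary : Matrix (Fin n) (Fin n) ℂ)
    with hVdef
  set p : Fin n → ℝ := hρ.1.eigenvalues with hpdef
  have hV1 : star V * V = 1 := Unitary.coe_star_mul_self hρ.1.eigenvectorUnitary
  have hV2 : V * star V = 1 := Unitary.coe_mul_star_self hρ.1.eigenvectorUnitary
  have hρdiag : ρ = V * diagonal (fun i => ((p i : ℝ) : ℂ)) * star V := hρ.1.spectral_theorem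
  have hρcfc : hρ.1.cfc Real.log
      = V * diagonal (fun i => ((Real.log (p i) : ℝ) : ℂ)) * star V := rfl
  have hstarρV : star V * ρ * V = diagonal (fun i => ((p i : ℝ) : ℂ)) := by
    rw [hρdiag]; exact conj_reduce hV1
  have hp0 : ∀ i, 0 ≤ p i := fun i => hρ.eigenvalues_nonneg i
  have hpsum : ∑ i, p i = 1 := by
    have h1 : ρ.trace = ((∑ i, p i : ℝ) : ℂ) := by
      rw [hρdiag, Matrix.trace_mul_cycle, hV1, one_mul, Matrix.trace_diagonal]
      push_cast
      rfl
    rw [hρtr] at h1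
    exact_mod_cast h1.symm
  set W : Matrix (Fin n) (Fin n) ℂ := star U * V with hWdef
  set c : Fin n → Fin n → ℝ := fun j i => Complex.normSq (W j i) with hcdef
  have hc0 : ∀ j i, 0 ≤ c j i := fun j i => Complex.normSq_nonneg _
  have hstarW : star W = star V * U := by rw [hWdef, Matrix.star_mul, star_star]
  have hWW : W * star W = 1 := by
    have h1 : W * star W = star U * (V * star V) * U := by
      rw [hWdef, hstarW]; simp only [mul_assoc]
    rw [h1, hV2, mul_one, hU1]
  have hWW' : star W * W = 1 := by
    have h1 : star W * W = star V * (U * star U) * V := by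
      rw [hWdef, hstarW]; simp only [mul_assoc]
    rw [h1, hU2, mul_one, hV1]
  have hrow : ∀ j, ∑ i, c j i = 1 := by
    intro j
    have h1 := congrArg (fun A : Matrix (Fin n) (Fin n) ℂ => A j j) hWW
    simp only [Matrix.mul_apply, Matrix.one_apply_eq, Matrix.star_apply, Complex.star_def,
      Complex.mul_conj] at h1
    exact_mod_cast h1
  have hcol : ∀ i, ∑ j, c j i = 1 := by
    intro i
    have h1 := congrArg (fun A : Matrix (Fin n) (Fin n) ℂ => A i i) hWW'
    simp only [Matrix.mul_apply, Matrix.one_apply_eq, Matrix.star_apply, Complex.star_def] at h1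
    have h2 : ∀ j, (starRingEnd ℂ) (W j i) * W j i = ((c j i : ℝ) : ℂ) := by
      intro j
      rw [mul_comm, Complex.mul_conj]
    rw [Finset.sum_congr rfl (fun j _ => h2 j)] at h1
    exact_mod_cast h1
  have hMW : star U * ρ * U = W * diagonal (fun i => ((p i : ℝ) : ℂ)) * star W := by
    rw [hρdiag, hWdef, hstarW]
    simp only [mul_assoc]
  have hMjj : ∀ j, (star U * ρ * U) j j = ((∑ i, p i * c j i : ℝ) : ℂ) := by
    intro j
    rw [hMW, conj_diag_apply]
    push_cast
    simp only [hcdef]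
  -- trace computations
  have t1 : (H * ρ).trace = ((∑ j, lam j * (∑ i, p i * c j i) : ℝ) : ℂ) := by
    rw [Matrix.trace_mul_comm]
    conv_lhs => rw [hHdiag]
    rw [trace_mul_triple]
    simp only [hMjj]
    norm_cast
  have t2 : (H * ρH).trace = ((∑ j, lam j * q j : ℝ) : ℂ) := by
    rw [Matrix.trace_mul_comm]
    conv_lhs => rw [hHdiag]
    rw [trace_mul_triple]
    simp only [hstarρH, Matrix.diagonal_apply_eq]
    norm_cast
  have t3 : (ρ * hρH.cfc Real.log).trace
      = ((∑ j, (-β * lam j - L) * (∑ i, p i * c j i) : ℝ) : ℂ) := by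
    rw [hρHcfc, trace_mul_triple]
    simp only [hMjj]
    norm_cast
  have t4 : (ρH * hρH.cfc Real.log).trace = ((∑ j, (-β * lam j - L) * q j : ℝ) : ℂ) := by
    rw [hρHcfc, trace_mul_triple]
    simp only [hstarρH, Matrix.diagonal_apply_eq]
    norm_cast
  have t5 : (ρ * hρ.1.cfc Real.log).trace = ((∑ i, Real.log (p i) * p i : ℝ) : ℂ) := by
    rw [hρcfc, trace_mul_triple]
    simp only [hstarρV, Matrix.diagonal_apply_eq]
    norm_cast
  set E : ℝ := ∑ j, lam j * (∑ i, p i * c j i) with hEdef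
  set A : ℝ := ∑ j, lam j * q j with hAdef
  set S : ℝ := ∑ i, p i * Real.log (p i) with hSdef
  have hT1 : (H * ρ).trace.re = E := by rw [t1, Complex.ofReal_re]
  have hT2 : (H * ρH).trace.re = A := by rw [t2, Complex.ofReal_re]
  have hEnt1 : vnEntropy hρ.1 = -S := by
    unfold vnEntropy
    rw [t5, Complex.ofReal_re, hSdef]
    congr 1
    exact Finset.sum_congr rfl fun i _ => mul_comm _ _
  have hEnt2 : vnEntropy hρH = β * A + L := by
    unfold vnEntropy
    rw [t4, Complex.ofReal_re]
    have e1 : ∀ j, (-β * lam j - L) * q j = -β * (lam j * q j) - L * q j := fun j => by ring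
    simp only [e1]
    rw [Finset.sum_sub_distrib, ← Finset.mul_sum, ← Finset.mul_sum, hqsum, mul_one, ← hAdef]
    ring
  have hwsum : ∑ j, (∑ i, p i * c j i) = 1 := by
    rw [Finset.sum_comm]
    have h5 : ∀ i, ∑ j, p i * c j i = p i := fun i => by rw [← Finset.mul_sum, hcol i, mul_one]
    simp only [h5, hpsum]
  have hK0 := klein_sum p q c hp0 hq0 hc0 hrow hcol hpsum hqsum
  have hK : -β * E - L ≤ S := by
    have e : ∑ j, (∑ i, p i * c j i) * Real.log (q j) = -β * E - L := by
      have e1 : ∀ j, (∑ i, p i * c j i) * Real.log (q j)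
          = -β * (lam j * (∑ i, p i * c j i)) - L * (∑ i, p i * c j i) := fun j => by
        rw [hlogq j]; ring
      simp only [e1]
      rw [Finset.sum_sub_distrib, ← Finset.mul_sum, ← Finset.mul_sum, hwsum, mul_one, ← hEdef]
    rw [e] at hK0
    exact hK0
  constructor
  · rw [hT1, hT2, hEnt2, hEnt1]
    have lhs_eq : A - (β * A + L) / β = -L / β := by field_simp; ring
    have rhs_eq : E - -S / β = (β * E + S) / β := by field_simp; ring
    rw [lhs_eq, rhs_eq]
    gcongr
    linarith
  · rw [hT2, hEnt2, hGtrRe, ← hLdef]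
    field_simp
    ring
end
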